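/- arXiv:1806.07870 — 3 statements merged into one kernel-verified Lean document; each statement's English description precedes it below -/
import Mathlib

section
/- Let Z_w be a chi-square random variable with w degrees of freedom and f(x) = x − 1 − log x. Then Var(f(Z_w/w)) = ψ⁽¹⁾(w/2) − 2/w, where ψ⁽¹⁾ is the trigamma function. -/
open MeasureTheory ProbabilityTheory

/-- The chi-square distribution with `w` degrees of freedom, as a Gamma distribution. -/
noncomputable def chiSqMeasure (w : ℝ) : Measure ℝ := gammaMeasure (w / 2) (1 / 2)

/-- The trigamma function `ψ⁽¹⁾(x) = d²/dx² log Γ(x)`. -/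
noncomputable def trigamma (x : ℝ) : ℝ := deriv (deriv (fun y => Real.log (Real.Gamma y))) x

namespace ChiSqAux

open Set Filter Asymptotics
open scoped Topology Real NNReal ENNReal


noncomputable def f0 : ℝ → ℂ := fun t => ((Real.exp (-(1/2 * t)) : ℝ) : ℂ)
noncomputable def f1 : ℝ → ℂ := fun t => Real.log t • f0 t
noncomputable def f2 : ℝ → ℂ := fun t => Real.log t • f1 t

noncomputable def P (y t : ℝ) : ℝ := t ^ (y - 1) * Real.exp (-(1/2 * t))
noncomputable def PL (y t : ℝ) : ℝ := t ^ (y - 1) * (Real.log t * Real.exp (-(1/2 * t)))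
noncomputable def PLL (y t : ℝ) : ℝ :=
  t ^ (y - 1) * (Real.log t * (Real.log t * Real.exp (-(1/2 * t))))

noncomputable def H (y : ℝ) : ℝ := ∫ t in Ioi (0:ℝ), P y t
noncomputable def L1 (y : ℝ) : ℝ := ∫ t in Ioi (0:ℝ), PL y t
noncomputable def L2 (y : ℝ) : ℝ := ∫ t in Ioi (0:ℝ), PLL y t

lemma f0_cont : Continuous f0 :=
  Complex.continuous_ofReal.comp (Real.continuous_exp.comp (by continuity))

lemma f0_locInt : LocallyIntegrableOn f0 (Ioi 0) :=
  f0_cont.continuousOn.locallyIntegrableOn measurableSet_Ioi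

lemma f0_top (b : ℝ) : f0 =O[atTop] (· ^ (-b)) := by
  rw [← isBigO_norm_left]
  simp_rw [f0, Complex.norm_real, isBigO_norm_left]
  simpa only [neg_mul] using
    (isLittleO_exp_neg_mul_rpow_atTop (by norm_num : (0:ℝ) < 1/2) _).isBigO

lemma f0_bot : f0 =O[𝓝[>] 0] (· ^ (-(0:ℝ))) := by
  simp_rw [neg_zero, Real.rpow_zero]
  refine isBigO_const_of_tendsto (?_ : Tendsto _ _ (𝓝 (1 : ℂ))) one_ne_zero
  have h : Tendsto f0 (𝓝 0) (𝓝 (1 : ℂ)) := by simpa [f0] using f0_cont.tendsto 0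
  exact h.mono_left nhdsWithin_le_nhds

lemma f1_locInt : LocallyIntegrableOn f1 (Ioi 0) := by
  refine ContinuousOn.locallyIntegrableOn ?_ measurableSet_Ioi
  refine ContinuousOn.smul (Real.continuousOn_log.mono ?_) f0_cont.continuousOn
  exact fun t ht => ne_of_gt ht

lemma f1_top (b : ℝ) : f1 =O[atTop] (· ^ (-b)) :=
  isBigO_rpow_top_log_smul (lt_add_one b) (f0_top (b+1))

lemma f1_bot {b : ℝ} (hb : 0 < b) : f1 =O[𝓝[>] 0] (· ^ (-b)) :=
  isBigO_rpow_zero_log_smul hb f0_bot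

lemma d0 {s : ℂ} (hs : 0 < s.re) :
    MellinConvergent f1 s ∧ HasDerivAt (mellin f0) (mellin f1 s) s :=
  mellin_hasDerivAt_of_isBigO_rpow f0_locInt (f0_top (s.re + 1)) (lt_add_one _) f0_bot
    (by simpa using hs)

lemma mc0 {s : ℂ} (hs : 0 < s.re) : MellinConvergent f0 s :=
  mellinConvergent_of_isBigO_rpow f0_locInt (f0_top (s.re + 1)) (lt_add_one _) f0_bot
    (by simpa using hs)

lemma d1 {s : ℂ} (hs : 0 < s.re) :
    MellinConvergent f2 s ∧ HasDerivAt (mellin f1) (mellin f2 s) s :=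
  mellin_hasDerivAt_of_isBigO_rpow f1_locInt (f1_top (s.re + 1)) (lt_add_one _)
    (f1_bot (half_pos hs)) (by linarith)

lemma mellin_ofReal (g : ℝ → ℝ) (y : ℝ) :
    mellin (fun t => ((g t : ℝ) : ℂ)) (y : ℂ) = ((∫ t in Ioi (0:ℝ), t ^ (y - 1) * g t : ℝ) : ℂ) := by
  rw [mellin]
  have h : ∀ t ∈ Ioi (0:ℝ), (t:ℂ) ^ ((y:ℂ) - 1) • ((g t : ℝ) : ℂ) = ((t ^ (y-1) * g t : ℝ) : ℂ) := by
    intro t ht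
    rw [smul_eq_mul, show ((y:ℂ) - 1) = ((y-1:ℝ):ℂ) by push_cast; ring,
      ← Complex.ofReal_cpow (le_of_lt ht), ← Complex.ofReal_mul]
  rw [setIntegral_congr_fun measurableSet_Ioi h]
  exact integral_ofReal

lemma mellin_f0 (y : ℝ) : mellin f0 (y : ℂ) = ((H y : ℝ) : ℂ) := mellin_ofReal _ y
lemma mellin_f1 (y : ℝ) : mellin f1 (y : ℂ) = ((L1 y : ℝ) : ℂ) := by
  rw [show f1 = fun t => ((Real.log t * Real.exp (-(1/2 * t)) : ℝ) : ℂ) by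
    funext t; simp [f1, f0, Complex.real_smul]]
  exact mellin_ofReal _ y
lemma mellin_f2 (y : ℝ) : mellin f2 (y : ℂ) = ((L2 y : ℝ) : ℂ) := by
  rw [show f2 = fun t => ((Real.log t * (Real.log t * Real.exp (-(1/2 * t))) : ℝ) : ℂ) by
    funext t; simp [f2, f1, f0, Complex.real_smul]]
  exact mellin_ofReal _ y

lemma H_deriv {y : ℝ} (hy : 0 < y) : HasDerivAt H (L1 y) y := by
  have h := ((d0 (s := (y:ℂ)) (by simpa using hy)).2).real_of_complex
  have e1 : (fun x : ℝ => (mellin f0 (x:ℂ)).re) = H := by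
    funext x; rw [mellin_f0, Complex.ofReal_re]
  rw [e1, mellin_f1, Complex.ofReal_re] at h
  exact h

lemma L1_deriv {y : ℝ} (hy : 0 < y) : HasDerivAt L1 (L2 y) y := by
  have h := ((d1 (s := (y:ℂ)) (by simpa using hy)).2).real_of_complex
  have e1 : (fun x : ℝ => (mellin f1 (x:ℂ)).re) = L1 := by
    funext x; rw [mellin_f1, Complex.ofReal_re]
  rw [e1, mellin_f2, Complex.ofReal_re] at h
  exact h

lemma intOn_of_mc {g : ℝ → ℝ} {y : ℝ}
    (h : MellinConvergent (fun t => ((g t : ℝ) : ℂ)) (y : ℂ)) :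
    IntegrableOn (fun t => t ^ (y - 1) * g t) (Ioi (0:ℝ)) := by
  have h2 := h.re
  refine h2.congr ?_
  filter_upwards [ae_restrict_mem measurableSet_Ioi] with t ht
  rw [smul_eq_mul, show ((y:ℂ) - 1) = ((y-1:ℝ):ℂ) by push_cast; ring,
    ← Complex.ofReal_cpow (le_of_lt ht), ← Complex.ofReal_mul]
  simp

lemma intOn_P {y : ℝ} (hy : 0 < y) : IntegrableOn (P y) (Ioi (0:ℝ)) :=
  intOn_of_mc (mc0 (s := (y:ℂ)) (by simpa using hy))

lemma intOn_PL {y : ℝ} (hy : 0 < y) : IntegrableOn (PL y) (Ioi (0:ℝ)) := by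
  have h := (d0 (s := (y:ℂ)) (by simpa using hy)).1
  rw [show f1 = fun t => ((Real.log t * Real.exp (-(1/2 * t)) : ℝ) : ℂ) by
    funext t; simp [f1, f0, Complex.real_smul]] at h
  exact intOn_of_mc h

lemma intOn_PLL {y : ℝ} (hy : 0 < y) : IntegrableOn (PLL y) (Ioi (0:ℝ)) := by
  have h := (d1 (s := (y:ℂ)) (by simpa using hy)).1
  rw [show f2 = fun t => ((Real.log t * (Real.log t * Real.exp (-(1/2 * t))) : ℝ) : ℂ) by
    funext t; simp [f2, f1, f0, Complex.real_smul]] at h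
  exact intOn_of_mc h

lemma H_val {y : ℝ} (hy : 0 < y) : H y = 2 ^ y * Real.Gamma y := by
  have := Real.integral_rpow_mul_exp_neg_mul_Ioi hy (by norm_num : (0:ℝ) < 1/2)
  rw [show (1 : ℝ) / (1/2) = 2 by norm_num] at this
  simpa [H, P] using this

lemma H_pos {y : ℝ} (hy : 0 < y) : 0 < H y := by
  rw [H_val hy]
  positivity


lemma H_rec {y : ℝ} (hy : 0 < y) : H (y + 1) = 2 * y * H y := by
  rw [H_val (by linarith), H_val hy, Real.Gamma_add_one hy.ne',
    Real.rpow_add (by norm_num : (0:ℝ) < 2), Real.rpow_one]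
  ring

lemma L1_rec {y : ℝ} (hy : 0 < y) : L1 (y + 1) = 2 * H y + 2 * y * L1 y := by
  have hF : HasDerivAt (fun z => H (z + 1)) (L1 (y + 1)) y := by
    simpa [Function.comp_def] using (H_deriv (by linarith : 0 < y + 1)).comp y ((hasDerivAt_id y).add_const 1)
  have hG : HasDerivAt (fun z => 2 * z * H z) (2 * H y + 2 * y * L1 y) y := by
    have h := ((hasDerivAt_id y).const_mul 2).mul (H_deriv hy)
    refine h.congr_deriv ?_
    simp only [id_eq]
    ring
  have heq : (fun z => 2 * z * H z) =ᶠ[𝓝 y] fun z => H (z + 1) := by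
    filter_upwards [Ioi_mem_nhds hy] with z hz
    rw [H_rec hz]
  exact ((hG.congr_of_eventuallyEq heq.symm).unique hF).symm

lemma trigamma_eq {y : ℝ} (hy : 0 < y) :
    deriv (deriv (fun x => Real.log (Real.Gamma x))) y = L2 y / H y - (L1 y / H y) ^ 2 := by
  have hD : ∀ z, 0 < z → HasDerivAt (fun x => Real.log (Real.Gamma x))
      (L1 z / H z - Real.log 2) z := by
    intro z hz
    have h1 : HasDerivAt (fun x => Real.log (H x) - x * Real.log 2)
        (L1 z / H z - Real.log 2) z := by
      have hl := (H_deriv hz).log (H_pos hz).ne'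
      simpa [Pi.sub_def] using hl.sub ((hasDerivAt_id z).mul_const (Real.log 2))
    refine h1.congr_of_eventuallyEq ?_
    filter_upwards [Ioi_mem_nhds hz] with x hx
    rw [H_val hx, Real.log_mul (by positivity) (Real.Gamma_pos_of_pos hx).ne',
      Real.log_rpow (by norm_num : (0:ℝ) < 2)]
    ring
  have hderiv1 : deriv (fun x => Real.log (Real.Gamma x))
      =ᶠ[𝓝 y] fun z => L1 z / H z - Real.log 2 := by
    filter_upwards [Ioi_mem_nhds hy] with z hz
    exact (hD z hz).deriv
  rw [Filter.EventuallyEq.deriv_eq hderiv1]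
  have h2 : HasDerivAt (fun z => L1 z / H z - Real.log 2)
      ((L2 y * H y - L1 y * L1 y) / (H y) ^ 2) y := by
    simpa using ((L1_deriv hy).div (H_deriv hy) (H_pos hy).ne').sub_const (Real.log 2)
  rw [h2.deriv]
  have h3 := (H_pos hy).ne'
  field_simp


open ProbabilityTheory in
lemma pdf_smul_ae {a : ℝ} (ha : 0 < a) (g : ℝ → ℝ) :
    (fun x => (Real.toNNReal (gammaPDFReal a (1/2) x)) • g x)
      =ᵐ[(volume : Measure ℝ)]
    (Ioi (0:ℝ)).indicator (fun t => ((1/2:ℝ) ^ a / Real.Gamma a) * (P a t * g t)) := by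
  have h0 : {(0:ℝ)}ᶜ ∈ ae (volume : Measure ℝ) :=
    compl_mem_ae_iff.mpr (measure_singleton 0)
  filter_upwards [h0] with x hx
  rcases lt_or_gt_of_ne (by simpa using hx : x ≠ 0) with h | h
  · rw [indicator_of_notMem (notMem_Ioi.mpr h.le)]
    simp [gammaPDFReal, not_le.mpr h]
  · rw [indicator_of_mem (mem_Ioi.mpr h)]
    rw [NNReal.smul_def, Real.coe_toNNReal _ (gammaPDFReal_nonneg ha (by norm_num) x)]
    simp only [gammaPDFReal, if_pos h.le, P, smul_eq_mul]
    ring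

open ProbabilityTheory in
lemma gammaPDF_eq_coe (a : ℝ) : gammaPDF a (1/2)
    = fun x => ((Real.toNNReal (gammaPDFReal a (1/2) x) : ℝ≥0) : ℝ≥0∞) := rfl

open ProbabilityTheory in
lemma integral_gamma_aux {a : ℝ} (ha : 0 < a) (g : ℝ → ℝ) :
    ∫ x, g x ∂(gammaMeasure a (1/2)) =
      ((1/2:ℝ) ^ a / Real.Gamma a) * ∫ t in Ioi (0:ℝ), P a t * g t := by
  rw [gammaMeasure, gammaPDF_eq_coe,
    integral_withDensity_eq_integral_smul ((measurable_gammaPDFReal a (1/2)).real_toNNReal) g]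
  rw [integral_congr_ae (pdf_smul_ae ha g), integral_indicator measurableSet_Ioi,
    integral_const_mul]

open ProbabilityTheory in
lemma integrable_gamma_aux {a : ℝ} (ha : 0 < a) {g : ℝ → ℝ}
    (hg : IntegrableOn (fun t => P a t * g t) (Ioi (0:ℝ))) :
    Integrable g (gammaMeasure a (1/2)) := by
  rw [gammaMeasure, gammaPDF_eq_coe,
    integrable_withDensity_iff_integrable_smul
      ((measurable_gammaPDFReal a (1/2)).real_toNNReal)]
  refine Integrable.congr ?_ (pdf_smul_ae ha g).symm
  exact (integrable_indicator_iff measurableSet_Ioi).mpr (hg.const_mul _)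

end ChiSqAux

open Set ChiSqAux

/-- If `Z_w ~ χ²_w` and `f(x) = x − 1 − log x`, then
`Var(f(Z_w/w)) = ψ⁽¹⁾(w/2) − 2/w`. -/
theorem chiSq_variance_f (w : ℕ) (hw : 0 < w) :
    variance (fun x => x / w - 1 - Real.log (x / w)) (chiSqMeasure w) =
      trigamma (w / 2) - 2 / w := by
  set W : ℝ := (w : ℝ) with hWdef
  have hW : 0 < W := by rw [hWdef]; exact_mod_cast hw
  set a : ℝ := W / 2 with hadef
  have ha : 0 < a := by positivity
  have ha1 : 0 < a + 1 := by linarith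
  have ha2 : 0 < a + 2 := by linarith
  have haW : W = 2 * a := by rw [hadef]; ring
  set Y : ℝ → ℝ := fun x => x / W - 1 - Real.log (x / W) with hYdef
  have hcs : chiSqMeasure W = gammaMeasure a (1/2) := by rw [hadef]; rfl
  haveI : IsProbabilityMeasure (gammaMeasure a (1/2)) :=
    isProbabilityMeasure_gammaMeasure ha (by norm_num)
  set c : ℝ := Real.log W - 1 with hcdef
  have hrp1 : ∀ t : ℝ, 0 < t → t ^ (a + 1 - 1) = t ^ (a - 1) * t := by
    intro t ht
    rw [show a + 1 - 1 = (a - 1) + 1 by ring, Real.rpow_add ht, Real.rpow_one]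
  have hrp2 : ∀ t : ℝ, 0 < t → t ^ (a + 2 - 1) = t ^ (a - 1) * t * t := by
    intro t ht
    rw [show a + 2 - 1 = ((a - 1) + 1) + 1 by ring, Real.rpow_add ht, Real.rpow_add ht,
      Real.rpow_one]
  have hexp1 : ∀ t ∈ Ioi (0:ℝ), P a t * Y t
      = W⁻¹ * P (a+1) t + c * P a t - PL a t := by
    intro t ht
    have ht' : (0:ℝ) < t := ht
    simp only [P, PL, hYdef, hcdef]
    rw [Real.log_div ht'.ne' hW.ne', hrp1 t ht']
    field_simp
    ring
  have hexp2 : ∀ t ∈ Ioi (0:ℝ), P a t * Y t ^ 2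
      = (W⁻¹ * W⁻¹) * P (a+2) t - (2 * W⁻¹) * PL (a+1) t + (2 * c * W⁻¹) * P (a+1) t
        + PLL a t - (2 * c) * PL a t + c ^ 2 * P a t := by
    intro t ht
    have ht' : (0:ℝ) < t := ht
    simp only [P, PL, PLL, hYdef, hcdef]
    rw [Real.log_div ht'.ne' hW.ne', hrp1 t ht', hrp2 t ht']
    field_simp
    ring
  have iP0 := intOn_P ha
  have iP1 := intOn_P ha1
  have iP2 := intOn_P ha2
  have iL0 := intOn_PL ha
  have iL1' := intOn_PL ha1
  have iLL := intOn_PLL ha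
  have hEY : ∫ x, Y x ∂(gammaMeasure a (1/2))
      = ((1/2:ℝ)^a / Real.Gamma a) * (W⁻¹ * H (a+1) + c * H a - L1 a) := by
    rw [integral_gamma_aux ha Y]
    congr 1
    have hS1 : Integrable (fun t => W⁻¹ * P (a+1) t + c * P a t)
        ((volume : Measure ℝ).restrict (Ioi 0)) := by
      exact (iP1.const_mul _).add (iP0.const_mul _)
    rw [setIntegral_congr_fun measurableSet_Ioi hexp1,
      integral_sub hS1 iL0,
      integral_add (iP1.const_mul _) (iP0.const_mul _), integral_const_mul, integral_const_mul]
    rfl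
  have hEY2 : ∫ x, Y x ^ 2 ∂(gammaMeasure a (1/2))
      = ((1/2:ℝ)^a / Real.Gamma a) * ((W⁻¹ * W⁻¹) * H (a+2) - (2 * W⁻¹) * L1 (a+1)
          + (2 * c * W⁻¹) * H (a+1) + L2 a - (2 * c) * L1 a + c^2 * H a) := by
    rw [integral_gamma_aux ha (fun x => Y x ^ 2)]
    congr 1
    have hA := iP2.const_mul (W⁻¹ * W⁻¹)
    have hB := iL1'.const_mul (2 * W⁻¹)
    have hC := iP1.const_mul (2 * c * W⁻¹)
    have hD := iLL
    have hE := iL0.const_mul (2 * c)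
    have hF := iP0.const_mul (c ^ 2)
    have hAB : Integrable (fun x => W⁻¹ * W⁻¹ * P (a+2) x - 2 * W⁻¹ * PL (a+1) x)
        ((volume : Measure ℝ).restrict (Ioi 0)) := by exact hA.sub hB
    have hABC : Integrable (fun x => W⁻¹ * W⁻¹ * P (a+2) x - 2 * W⁻¹ * PL (a+1) x
        + 2 * c * W⁻¹ * P (a+1) x) ((volume : Measure ℝ).restrict (Ioi 0)) := by exact hAB.add hC
    have hABCD : Integrable (fun x => W⁻¹ * W⁻¹ * P (a+2) x - 2 * W⁻¹ * PL (a+1) x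
        + 2 * c * W⁻¹ * P (a+1) x + PLL a x) ((volume : Measure ℝ).restrict (Ioi 0)) := by
      exact hABC.add hD
    have hABCDE : Integrable (fun x => W⁻¹ * W⁻¹ * P (a+2) x - 2 * W⁻¹ * PL (a+1) x
        + 2 * c * W⁻¹ * P (a+1) x + PLL a x - 2 * c * PL a x)
        ((volume : Measure ℝ).restrict (Ioi 0)) := by exact hABCD.sub hE
    rw [setIntegral_congr_fun measurableSet_Ioi hexp2,
      integral_add hABCDE hF,
      integral_sub hABCD hE,
      integral_add hABC hD,
      integral_add hAB hC,
      integral_sub hA hB,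
      integral_const_mul, integral_const_mul, integral_const_mul, integral_const_mul,
      integral_const_mul]
    rfl
  have hYm : Measurable Y :=
    ((measurable_id.div_const W).sub measurable_const).sub
      (Real.measurable_log.comp (measurable_id.div_const W))
  have hY2int : Integrable (fun x => Y x ^ 2) (gammaMeasure a (1/2)) := by
    apply integrable_gamma_aux ha
    have hint : IntegrableOn (fun t => (W⁻¹ * W⁻¹) * P (a+2) t - (2 * W⁻¹) * PL (a+1) t
        + (2 * c * W⁻¹) * P (a+1) t + PLL a t - (2 * c) * PL a t + c ^ 2 * P a t)
        (Ioi (0:ℝ)) :=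
      (((((iP2.const_mul _).sub (iL1'.const_mul _)).add (iP1.const_mul _)).add iLL).sub
        (iL0.const_mul _)).add (iP0.const_mul _)
    exact hint.congr_fun (fun t ht => (hexp2 t ht).symm) measurableSet_Ioi
  have hmem : MemLp Y 2 (gammaMeasure a (1/2)) :=
    (memLp_two_iff_integrable_sq hYm.aestronglyMeasurable).2 hY2int
  rw [hcs, ProbabilityTheory.variance_eq_sub hmem]
  simp only [Pi.pow_apply]
  rw [hEY2, hEY]
  have htri : trigamma a = L2 a / H a - (L1 a / H a) ^ 2 := trigamma_eq ha
  rw [htri, L1_rec ha]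
  have hH1 : H (a+1) = 2 * a * H a := H_rec ha
  have hH2 : H (a+2) = 2 * (a+1) * H (a+1) := by
    rw [show a + 2 = (a+1) + 1 by ring, H_rec ha1]
  have hΓ := (Real.Gamma_pos_of_pos ha).ne'
  have h2a : ((1/2:ℝ))^a * 2^a = 1 := by
    rw [← Real.mul_rpow (by norm_num) (by norm_num)]
    norm_num
  have hCH : ((1/2:ℝ)^a / Real.Gamma a) * H a = 1 := by
    have hre : ((1/2:ℝ)^a / Real.Gamma a) * (2^a * Real.Gamma a)
        = ((1/2:ℝ)^a * 2^a) * (Real.Gamma a / Real.Gamma a) := by ring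
    rw [H_val ha, hre, div_self hΓ, h2a, mul_one]
  have hC : ((1/2:ℝ)^a / Real.Gamma a) = (H a)⁻¹ := eq_inv_of_mul_eq_one_left hCH
  rw [hC, hH2, hH1, haW]
  have hHne := (H_pos ha).ne'
  have hane := ha.ne'
  field_simp
  ring
end

section
/- There exists a universal constant C₁ > 0 such that for every w ∈ ℕ and every k ∈ ℕ, the k-th moment of w·f(Z_w/w) satisfies ‖w·f(Z_w/w)‖_k ≤ C₁ k, where Z_w is chi-square with w degrees of freedom, f(x) = x − 1 − log x, and ‖·‖_k denotes the L^k norm. -/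
open MeasureTheory ProbabilityTheory

/-- The barrier function `f(x) = x − 1 − log x`. -/
noncomputable def barrierF (x : ℝ) : ℝ := x - 1 - Real.log x

open Real Set
open scoped ENNReal NNReal

lemma barrierF_nonneg {x : ℝ} (hx : 0 < x) : 0 ≤ barrierF x := by
  have := Real.log_le_sub_one_of_pos hx
  rw [barrierF]; linarith


/-- Elementary lower bound for Gamma: `Γ(z+1) ≥ e⁻¹ √z (z/e)^z`. -/
lemma gamma_lower {z : ℝ} (hz : 0 < z) :
    Real.exp (-1) * (z ^ z * Real.exp (-z)) * Real.sqrt z ≤ Real.Gamma (z + 1) := by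
  have hz1 : (0:ℝ) < z + 1 := by linarith
  have hint : IntegrableOn (fun x : ℝ => Real.exp (-x) * x ^ z) (Ioi 0) := by
    have := Real.GammaIntegral_convergent hz1
    simpa using this
  have hsub : Ioc z (z + Real.sqrt z) ⊆ Ioi (0:ℝ) := fun x hx => lt_trans hz hx.1
  have hpt : ∀ x ∈ Ioc z (z + Real.sqrt z),
      Real.exp (-1) * (z ^ z * Real.exp (-z)) ≤ Real.exp (-x) * x ^ z := by
    intro x hx
    have hxz : z ≤ x := le_of_lt hx.1
    have hx0 : 0 < x := lt_of_lt_of_le hz hxz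
    have hxu : x - z ≤ Real.sqrt z := by linarith [hx.2]
    -- key: z * (log x - log z) ≥ x - z - 1
    have hlog : 1 - z / x ≤ Real.log x - Real.log z := by
      have h := Real.log_le_sub_one_of_pos (show 0 < z / x by positivity)
      rw [Real.log_div hz.ne' hx0.ne'] at h
      linarith
    have hsq : (x - z) ^ 2 ≤ z := by
      have h1 : 0 ≤ x - z := by linarith
      calc (x - z)^2 ≤ (Real.sqrt z)^2 := by nlinarith
        _ = z := Real.sq_sqrt hz.le
    have hkey : z * Real.log z - z - 1 ≤ z * Real.log x - x := by
      have h2 : z * (1 - z / x) ≤ z * (Real.log x - Real.log z) :=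
        mul_le_mul_of_nonneg_left hlog hz.le
      have h4 : (x - z)^2 ≤ x := le_trans hsq hxz
      have h5 : z * (1 - z / x) - (x - z - 1) = (x - (x - z)^2)/x := by
        field_simp; ring
      have h6 : (0:ℝ) ≤ (x - (x - z)^2)/x := div_nonneg (by linarith) hx0.le
      nlinarith
    rw [Real.rpow_def_of_pos hx0, Real.rpow_def_of_pos hz]
    simp only [← Real.exp_add]
    exact Real.exp_le_exp.2 (by nlinarith [hkey])
  have hmeas : MeasurableSet (Ioc z (z + Real.sqrt z)) := measurableSet_Ioc
  have hvol : (volume (Ioc z (z + Real.sqrt z))).toReal = Real.sqrt z := by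
    rw [Real.volume_Ioc, ENNReal.toReal_ofReal (by nlinarith [Real.sqrt_nonneg z])]
    ring_nf
  have h1 : Real.exp (-1) * (z ^ z * Real.exp (-z)) * Real.sqrt z
      ≤ ∫ x in Ioc z (z + Real.sqrt z), Real.exp (-x) * x ^ z := by
    have := setIntegral_ge_of_const_le_real hmeas (by rw [Real.volume_Ioc]; exact ENNReal.ofReal_ne_top) hpt (hint.mono_set hsub)
    rwa [measureReal_def, hvol] at this
  have h2 : (∫ x in Ioc z (z + Real.sqrt z), Real.exp (-x) * x ^ z)
      ≤ ∫ x in Ioi 0, Real.exp (-x) * x ^ z := by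
    apply setIntegral_mono_set hint
    · filter_upwards [ae_restrict_mem measurableSet_Ioi] with x hx
      have : (0:ℝ) < x := hx
      positivity
    · exact HasSubset.Subset.eventuallyLE hsub
  rw [Real.Gamma_eq_integral hz1]
  calc Real.exp (-1) * (z ^ z * Real.exp (-z)) * Real.sqrt z
      ≤ ∫ x in Ioc z (z + Real.sqrt z), Real.exp (-x) * x ^ z := h1
    _ ≤ ∫ x in Ioi 0, Real.exp (-x) * x ^ z := h2
    _ = ∫ x in Ioi 0, Real.exp (-x) * x ^ (z + 1 - 1) := by norm_num

/-- From log-convexity of Gamma: `Γ(z+1) ≤ Γ(z+1/2) √(z+1/2)`. -/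
lemma gamma_half_lower {z : ℝ} (hz : 0 < z) :
    Real.Gamma (z + 1) ≤ Real.Gamma (z + 1/2) * Real.sqrt (z + 1/2) := by
  have ha : (z + 1/2) ∈ Ioi (0:ℝ) := by simp; linarith
  have hb : (z + 3/2) ∈ Ioi (0:ℝ) := by simp; linarith
  have hc := Real.convexOn_log_Gamma.2 ha hb (by norm_num : (0:ℝ) ≤ 1/2)
    (by norm_num : (0:ℝ) ≤ 1/2) (by norm_num)
  have hmid : (1/2 : ℝ) • (z + 1/2) + (1/2 : ℝ) • (z + 3/2) = z + 1 := by
    simp [smul_eq_mul]; ring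
  rw [hmid] at hc
  simp only [Function.comp_apply, smul_eq_mul] at hc
  have hG1 : 0 < Real.Gamma (z + 1) := Real.Gamma_pos_of_pos (by linarith)
  have hGh : 0 < Real.Gamma (z + 1/2) := Real.Gamma_pos_of_pos (by linarith)
  have hG3 : Real.Gamma (z + 3/2) = (z + 1/2) * Real.Gamma (z + 1/2) := by
    have : z + 3/2 = (z + 1/2) + 1 := by ring
    rw [this, Real.Gamma_add_one (by positivity)]
  calc Real.Gamma (z + 1) = Real.exp (Real.log (Real.Gamma (z + 1))) :=
        (Real.exp_log hG1).symm
    _ ≤ Real.exp (1/2 * Real.log (Real.Gamma (z + 1/2)) +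
          1/2 * Real.log (Real.Gamma (z + 3/2))) := Real.exp_le_exp.2 hc
    _ = Real.Gamma (z + 1/2) * Real.sqrt (z + 1/2) := by
        rw [hG3, Real.log_mul (by positivity) hGh.ne']
        rw [show (1/2 : ℝ) * Real.log (Real.Gamma (z + 1/2)) +
            1/2 * (Real.log (z + 1/2) + Real.log (Real.Gamma (z+1/2)))
            = Real.log (Real.Gamma (z + 1/2)) + Real.log (z + 1/2) * (1/2) by ring]
        rw [Real.exp_add, Real.exp_log hGh, ← Real.rpow_def_of_pos (by positivity),
          Real.sqrt_eq_rpow]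

/-- Uniform bound on the MGF constant `e^{-z} (4z)^z Γ(z)/Γ(2z)`. -/
lemma mgf_const_le {z : ℝ} (hz : 1/4 ≤ z) :
    Real.exp (-z) * (4*z) ^ z * Real.Gamma z / Real.Gamma (2*z) ≤ 17 := by
  have hz0 : (0:ℝ) < z := lt_of_lt_of_le (by norm_num) hz
  have hG2 : 0 < Real.Gamma (2*z) := Real.Gamma_pos_of_pos (by linarith)
  have hGh : 0 < Real.Gamma (z + 1/2) := Real.Gamma_pos_of_pos (by linarith)
  have hs : 0 < Real.sqrt (z + 1/2) := Real.sqrt_pos.2 (by linarith)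
  have ht : 0 < Real.sqrt z := Real.sqrt_pos.2 hz0
  set s := Real.sqrt (z + 1/2)
  set t := Real.sqrt z
  -- numeric bound
  have hsqrtpi : Real.sqrt π ≤ 1.775 := by
    rw [show (1.775:ℝ) = Real.sqrt (1.775^2) from (Real.sqrt_sq (by norm_num)).symm]
    exact Real.sqrt_le_sqrt (by nlinarith [Real.pi_lt_d2])
  have hsqrt3 : Real.sqrt 3 ≤ 1.7321 := by
    rw [show (1.7321:ℝ) = Real.sqrt (1.7321^2) from (Real.sqrt_sq (by norm_num)).symm]
    exact Real.sqrt_le_sqrt (by norm_num)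
  have hnum : 2 * Real.sqrt π * Real.exp 1 * Real.sqrt 3 ≤ 17 := by
    calc 2 * Real.sqrt π * Real.exp 1 * Real.sqrt 3
        ≤ 2 * 1.775 * 2.7182818286 * 1.7321 := by
          gcongr <;> first
            | exact hsqrtpi | exact Real.exp_one_lt_d9.le | exact hsqrt3 | positivity
      _ ≤ 17 := by norm_num
  have h2 : 2 * Real.sqrt π * Real.sqrt 3 ≤ 17 * Real.exp (-1) := by
    rw [Real.exp_neg]
    calc 2 * Real.sqrt π * Real.sqrt 3
        = (2 * Real.sqrt π * Real.exp 1 * Real.sqrt 3) * (Real.exp 1)⁻¹ := by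
          field_simp
      _ ≤ 17 * (Real.exp 1)⁻¹ :=
          mul_le_mul_of_nonneg_right hnum (by positivity)
  have hst : s ≤ Real.sqrt 3 * t := by
    rw [show Real.sqrt 3 * t = Real.sqrt (3*z) from (Real.sqrt_mul (by norm_num) z).symm]
    exact Real.sqrt_le_sqrt (by linarith)
  have hchain : Real.exp (-1) * (z ^ z * Real.exp (-z)) * t ≤ Real.Gamma (z + 1/2) * s :=
    le_trans (gamma_lower hz0) (gamma_half_lower hz0)
  have hAB : Real.exp (-z) * (2 * z ^ z) * Real.sqrt π ≤ 17 * Real.Gamma (z + 1/2) := by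
    rw [← mul_le_mul_iff_of_pos_right hs]
    have hP : (0:ℝ) ≤ z ^ z * Real.exp (-z) * t := by positivity
    have goal' : Real.exp (-z) * (2 * z ^ z) * Real.sqrt π * s
        ≤ 17 * Real.exp (-1) * (z ^ z * Real.exp (-z)) * t := by
      calc Real.exp (-z) * (2 * z ^ z) * Real.sqrt π * s
          ≤ Real.exp (-z) * (2 * z ^ z) * Real.sqrt π * (Real.sqrt 3 * t) := by
            gcongr
        _ = (2 * Real.sqrt π * Real.sqrt 3) * (z ^ z * Real.exp (-z) * t) := by ring
        _ ≤ (17 * Real.exp (-1)) * (z ^ z * Real.exp (-z) * t) :=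
            mul_le_mul_of_nonneg_right h2 hP
        _ = 17 * Real.exp (-1) * (z ^ z * Real.exp (-z)) * t := by ring
    nlinarith [goal', hchain]
  -- rpow algebra
  have key1 : (4*z) ^ z * (2:ℝ) ^ ((1:ℝ) - 2*z) = 2 * z ^ z := by
    have h4z : (4*z) ^ z = (4:ℝ) ^ z * z ^ z := Real.mul_rpow (by norm_num) hz0.le
    have h4 : (4:ℝ) ^ z = (2:ℝ) ^ (2*z) := by
      rw [show (4:ℝ) = (2:ℝ) ^ (2:ℝ) by
        rw [show (2:ℝ) = ((2:ℕ):ℝ) by norm_num, Real.rpow_natCast]; norm_num]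
      rw [← Real.rpow_mul (by norm_num)]
    rw [h4z, h4, mul_assoc, mul_comm ((z:ℝ) ^ z), ← mul_assoc, ← Real.rpow_add (by norm_num)]
    norm_num
  have dup := Real.Gamma_mul_Gamma_add_half z
  rw [div_le_iff₀ hG2, ← mul_le_mul_iff_of_pos_right hGh, mul_assoc _ (Real.Gamma z), dup]
  calc Real.exp (-z) * (4*z) ^ z * (Real.Gamma (2*z) * (2:ℝ) ^ ((1:ℝ) - 2*z) * Real.sqrt π)
      = (Real.exp (-z) * ((4*z) ^ z * (2:ℝ) ^ ((1:ℝ) - 2*z)) * Real.sqrt π)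
        * Real.Gamma (2*z) := by ring
    _ = (Real.exp (-z) * (2 * z ^ z) * Real.sqrt π) * Real.Gamma (2*z) := by rw [key1]
    _ ≤ (17 * Real.Gamma (z + 1/2)) * Real.Gamma (2*z) :=
        mul_le_mul_of_nonneg_right hAB hG2.le
    _ = 17 * Real.Gamma (2*z) * Real.Gamma (z + 1/2) := by ring

/-- Pointwise bound on `pdf * |Y|^k`. -/
lemma pointwise_key {W : ℝ} (hW : 0 < W) {k : ℕ} (hk : 1 ≤ k) {x : ℝ} (hx : 0 < x) :
    gammaPDFReal (W/2) (1/2) x * |W * barrierF (x / W)| ^ k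
      ≤ ((4*k : ℝ))^k * ((1/2:ℝ) ^ (W/2) / Real.Gamma (W/2)
          * (Real.exp (-(W/4)) * W ^ (W/4)))
        * (x ^ (W/4 - 1) * Real.exp (-(1/4 * x))) := by
  have hk0 : (0:ℝ) < (k:ℝ) := by exact_mod_cast hk
  set Y : ℝ := W * barrierF (x / W) with hYdef
  have hY0 : 0 ≤ Y := mul_nonneg hW.le (barrierF_nonneg (div_pos hx hW))
  have habs : |Y| = Y := abs_of_nonneg hY0
  -- part (a): Y^k ≤ (4k)^k exp(Y/4)
  have ha : Y ^ k ≤ ((4*k : ℝ))^k * Real.exp (Y/4) := by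
    have hle : Y ≤ (4*(k:ℝ)) * Real.exp (Y/(4*k)) := by
      calc Y = (4*(k:ℝ)) * (Y/(4*(k:ℝ))) := by field_simp
        _ ≤ (4*(k:ℝ)) * Real.exp (Y/(4*(k:ℝ))) := by
            gcongr
            linarith [Real.add_one_le_exp (Y/(4*(k:ℝ)))]
    calc Y ^ k ≤ ((4*(k:ℝ)) * Real.exp (Y/(4*(k:ℝ)))) ^ k := pow_le_pow_left₀ hY0 hle k
      _ = ((4*k : ℝ))^k * Real.exp (Y/4) := by
          rw [mul_pow, ← Real.exp_nat_mul]
          congr 2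
          field_simp
  -- part (b): exact identity
  have hb : x ^ (W/2-1) * Real.exp (-(1/2 * x)) * Real.exp (Y/4)
      = Real.exp (-(W/4)) * W ^ (W/4) * (x ^ (W/4-1) * Real.exp (-(1/4 * x))) := by
    have hY : Y = W * (x/W - 1 - (Real.log x - Real.log W)) := by
      rw [hYdef, barrierF, Real.log_div hx.ne' hW.ne']
    rw [hY, Real.rpow_def_of_pos hx, Real.rpow_def_of_pos hx, Real.rpow_def_of_pos hW]
    simp only [← Real.exp_add]
    rw [Real.exp_eq_exp]
    field_simp
    ring
  -- combine
  rw [gammaPDFReal, if_pos hx.le, habs]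
  calc (1/2:ℝ) ^ (W/2) / Real.Gamma (W/2) * x ^ (W/2-1) * Real.exp (-(1/2 * x)) * Y ^ k
      ≤ (1/2:ℝ) ^ (W/2) / Real.Gamma (W/2) * x ^ (W/2-1) * Real.exp (-(1/2 * x))
        * (((4*k : ℝ))^k * Real.exp (Y/4)) := by
        have hpos : (0:ℝ) ≤ (1/2:ℝ) ^ (W/2) / Real.Gamma (W/2) * x ^ (W/2-1)
            * Real.exp (-(1/2 * x)) := by
          have := Real.Gamma_pos_of_pos (show (0:ℝ) < W/2 by positivity)
          positivity
        exact mul_le_mul_of_nonneg_left ha hpos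
    _ = ((4*k : ℝ))^k * ((1/2:ℝ) ^ (W/2) / Real.Gamma (W/2))
        * (x ^ (W/2-1) * Real.exp (-(1/2 * x)) * Real.exp (Y/4)) := by ring
    _ = ((4*k : ℝ))^k * ((1/2:ℝ) ^ (W/2) / Real.Gamma (W/2))
        * (Real.exp (-(W/4)) * W ^ (W/4) * (x ^ (W/4-1) * Real.exp (-(1/4 * x)))) := by
        rw [hb]
    _ = ((4*k : ℝ))^k * ((1/2:ℝ) ^ (W/2) / Real.Gamma (W/2)
          * (Real.exp (-(W/4)) * W ^ (W/4)))
        * (x ^ (W/4 - 1) * Real.exp (-(1/4 * x))) := by ring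

/-- There is a universal constant `C₁ > 0` such that for every `w, k ∈ ℕ`, the `L^k` norm
of `w·f(Z_w/w)`, where `Z_w ~ χ²_w`, is at most `C₁ k`. -/
theorem lpNorm_w_f_chiSq_le :
    ∃ C₁ : ℝ, 0 < C₁ ∧ ∀ w k : ℕ, 1 ≤ w → 1 ≤ k →
      (∫ x, |(w : ℝ) * barrierF (x / w)| ^ (k : ℝ) ∂(chiSqMeasure w)) ^ ((1 : ℝ) / k)
        ≤ C₁ * k := by
  refine ⟨68, by norm_num, fun w k hw hk => ?_⟩
  have hW : (0:ℝ) < (w:ℝ) := by exact_mod_cast Nat.pos_of_ne_zero (by omega)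
  have hkR : (0:ℝ) < (k:ℝ) := by exact_mod_cast hk
  set W : ℝ := (w:ℝ) with hWdef
  set Y : ℝ → ℝ := fun x => W * barrierF (x / W) with hYdef
  have hYm : Measurable Y := by
    apply measurable_const.mul
    simp only [barrierF]
    exact ((measurable_id.div_const W).sub measurable_const).sub
      (Real.measurable_log.comp (measurable_id.div_const W))
  set z : ℝ := W/4 with hzdef
  have hz : (1:ℝ)/4 ≤ z := by
    rw [hzdef, hWdef]
    have : (1:ℝ) ≤ (w:ℝ) := by exact_mod_cast hw
    linarith
  have hz0 : (0:ℝ) < z := lt_of_lt_of_le (by norm_num) hz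
  have hG2 : 0 < Real.Gamma (W/2) := Real.Gamma_pos_of_pos (by positivity)
  -- the constant in the pointwise bound
  set Cs : ℝ := ((4*k : ℝ))^k * ((1/2:ℝ) ^ (W/2) / Real.Gamma (W/2)
      * (Real.exp (-(W/4)) * W ^ (W/4))) with hCs
  have hCs0 : 0 ≤ Cs := by
    rw [hCs]
    positivity
  set h : ℝ → ℝ := fun x => x ^ (z - 1) * Real.exp (-(1/4 * x)) with hhdef
  -- integrability of the comparison function
  have hint : IntegrableOn (fun x => Cs * h x) (Ioi (0:ℝ)) := by
    apply Integrable.const_mul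
    have h0 : IntegrableOn (fun x : ℝ => x ^ (z-1) * Real.exp (-(1/4) * x ^ (1:ℝ)))
        (Ioi (0:ℝ)) :=
      integrableOn_rpow_mul_exp_neg_mul_rpow (by linarith) (by norm_num) (by norm_num)
    apply h0.congr_fun _ measurableSet_Ioi
    intro x hx
    rw [hhdef]
    simp [Real.rpow_one]
  -- value of the comparison integral
  have hval : ∫ x in Ioi (0:ℝ), Cs * h x = Cs * ((1/(1/4:ℝ)) ^ z * Real.Gamma z) := by
    rw [integral_const_mul]
    congr 1
    exact Real.integral_rpow_mul_exp_neg_mul_Ioi hz0 (by norm_num)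
  -- the main integral bound
  have key : (∫ x, |Y x| ^ (k:ℕ) ∂(chiSqMeasure W)) ≤ (68*(k:ℝ))^(k:ℕ) := by
    have hnn : 0 ≤ᵐ[chiSqMeasure W] fun x => |Y x| ^ (k:ℕ) :=
      ae_of_all _ fun x => pow_nonneg (abs_nonneg _) _
    have hmeas : AEStronglyMeasurable (fun x => |Y x| ^ (k:ℕ)) (chiSqMeasure W) :=
      ((hYm.abs.pow_const k).aestronglyMeasurable)
    rw [integral_eq_lintegral_of_nonneg_ae hnn hmeas]
    have hpdfm : Measurable (gammaPDF (W/2) (1/2)) :=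
      (measurable_gammaPDFReal _ _).ennreal_ofReal
    have hFm : Measurable fun x => ENNReal.ofReal (|Y x| ^ (k:ℕ)) :=
      (hYm.abs.pow_const k).ennreal_ofReal
    have hwd : (∫⁻ x, ENNReal.ofReal (|Y x| ^ (k:ℕ)) ∂(chiSqMeasure W))
        = ∫⁻ x, gammaPDF (W/2) (1/2) x * ENNReal.ofReal (|Y x| ^ (k:ℕ)) := by
      rw [show chiSqMeasure W = volume.withDensity (gammaPDF (W/2) (1/2)) from rfl]
      rw [lintegral_withDensity_eq_lintegral_mul volume hpdfm hFm]
      rfl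
    set g : ℝ → ℝ≥0∞ := fun x => gammaPDF (W/2) (1/2) x * ENNReal.ofReal (|Y x| ^ (k:ℕ))
      with hgdef
    have hzero : (∫⁻ x in Iio (0:ℝ), g x) = 0 := by
      rw [setLIntegral_congr_fun measurableSet_Iio
        (fun x (hx : x < 0) => show g x = 0 by
          simp only [hgdef]
          rw [gammaPDF_of_neg hx, zero_mul])]
      exact lintegral_zero
    have hsplit : (∫⁻ x, g x) = ∫⁻ x in Ioi (0:ℝ), g x := by
      rw [← lintegral_add_compl g measurableSet_Iio, compl_Iio, hzero, zero_add]
      exact (setLIntegral_congr (Ioi_ae_eq_Ici (a := (0:ℝ)))).symm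
    have hbound : (∫⁻ x in Ioi (0:ℝ), g x)
        ≤ ∫⁻ x in Ioi (0:ℝ), ENNReal.ofReal (Cs * h x) := by
      apply setLIntegral_mono (by fun_prop)
      intro x hx
      rw [hgdef]
      simp only
      rw [gammaPDF, ← ENNReal.ofReal_mul (gammaPDFReal_nonneg (by positivity) (by norm_num) x)]
      apply ENNReal.ofReal_le_ofReal
      have := pointwise_key hW hk (x := x) hx
      calc gammaPDFReal (W/2) (1/2) x * |Y x| ^ (k:ℕ)
          ≤ ((4*k : ℝ))^k * ((1/2:ℝ) ^ (W/2) / Real.Gamma (W/2)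
              * (Real.exp (-(W/4)) * W ^ (W/4)))
            * (x ^ (W/4 - 1) * Real.exp (-(1/4 * x))) := this
        _ = Cs * h x := by rw [hCs, hhdef, hzdef]
    have hlift : (∫⁻ x in Ioi (0:ℝ), ENNReal.ofReal (Cs * h x))
        = ENNReal.ofReal (Cs * ((1/(1/4:ℝ)) ^ z * Real.Gamma z)) := by
      rw [← hval]
      rw [← ofReal_integral_eq_lintegral_ofReal hint]
      filter_upwards [ae_restrict_mem measurableSet_Ioi] with x hx
      have hx0 : (0:ℝ) < x := hx
      rw [hhdef]
      positivity
    apply ENNReal.toReal_le_of_le_ofReal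
    · positivity
    calc (∫⁻ x, ENNReal.ofReal (|Y x| ^ (k:ℕ)) ∂(chiSqMeasure W))
        = ∫⁻ x in Ioi (0:ℝ), g x := by rw [hwd, ← hgdef, hsplit]
      _ ≤ ∫⁻ x in Ioi (0:ℝ), ENNReal.ofReal (Cs * h x) := hbound
      _ = ENNReal.ofReal (Cs * ((1/(1/4:ℝ)) ^ z * Real.Gamma z)) := hlift
      _ ≤ ENNReal.ofReal ((68*(k:ℝ))^(k:ℕ)) := by
          apply ENNReal.ofReal_le_ofReal
          -- arithmetic: Cs * (4^z Γ z) ≤ (68 k)^k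
          have hW4z : W = 4*z := by rw [hzdef]; ring
          have hhalf : (1/2:ℝ) ^ (W/2) * (1/(1/4:ℝ)) ^ z = 1 := by
            have h1 : (1/2:ℝ) ^ (W/2) = ((1/4:ℝ)) ^ z := by
              rw [show W/2 = 2*z by rw [hzdef]; ring]
              rw [show ((1/4:ℝ)) = (1/2:ℝ) ^ (2:ℝ) by
                rw [show ((2:ℝ)) = ((2:ℕ):ℝ) by norm_num, Real.rpow_natCast]; norm_num]
              rw [← Real.rpow_mul (by norm_num)]
            rw [h1, show (1/(1/4:ℝ)) = (4:ℝ) by norm_num,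
              ← Real.mul_rpow (by norm_num) (by norm_num)]
            norm_num
          have hM := mgf_const_le hz
          have hrw : Cs * ((1/(1/4:ℝ)) ^ z * Real.Gamma z)
              = ((4*k : ℝ))^k * ((1/2:ℝ) ^ (W/2) * (1/(1/4:ℝ)) ^ z)
                * (Real.exp (-z) * (4*z) ^ z * Real.Gamma z / Real.Gamma (2*z)) := by
            rw [hCs]
            rw [show Real.Gamma (W/2) = Real.Gamma (2*z) by rw [hW4z]; ring_nf]
            rw [show W ^ (W/4) = (4*z) ^ z by rw [hW4z]; congr 1; ring]
            rw [show -(W/4) = -z by rw [hzdef]]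
            field_simp
          rw [hrw, hhalf, mul_one]
          calc ((4*k : ℝ))^k * (Real.exp (-z) * (4*z) ^ z * Real.Gamma z / Real.Gamma (2*z))
              ≤ ((4*k : ℝ))^k * 17 := by
                apply mul_le_mul_of_nonneg_left hM (by positivity)
            _ ≤ ((4*k : ℝ))^k * 17^k := by
                apply mul_le_mul_of_nonneg_left _ (by positivity)
                exact le_self_pow₀ (by norm_num) (by omega)
            _ = (68*(k:ℝ))^(k:ℕ) := by
                rw [← mul_pow]
                ring_nf
  -- conclude
  have Inn : 0 ≤ ∫ x, |Y x| ^ (k:ℕ) ∂(chiSqMeasure W) :=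
    integral_nonneg fun x => pow_nonneg (abs_nonneg _) _
  have hfinal := Real.rpow_le_rpow Inn key (by positivity : (0:ℝ) ≤ 1/(k:ℝ))
  rw [← Real.rpow_natCast (68*(k:ℝ)) k, ← Real.rpow_mul (by positivity),
    mul_one_div, div_self (ne_of_gt hkR), Real.rpow_one] at hfinal
  calc (∫ x, |(w:ℝ) * barrierF (x / (w:ℝ))| ^ (k:ℝ) ∂(chiSqMeasure (w:ℝ))) ^ ((1:ℝ)/k)
      = (∫ x, |Y x| ^ (k:ℕ) ∂(chiSqMeasure W)) ^ ((1:ℝ)/k) := by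
        congr 1
        apply integral_congr_ae
        filter_upwards with x
        rw [Real.rpow_natCast]
    _ ≤ 68 * k := hfinal
end

section
/- For a chi-square random variable Z_w with w degrees of freedom and f(x) = x − 1 − log x, the exponential moment satisfies E[exp((w/4)·f(Z_w/w))] = exp(−w/4 + (w/4)·log w + log Γ(w/4) − log Γ(w/2)). -/
open MeasureTheory ProbabilityTheory

/-- For `Z_w ~ χ²_w` and `f(x) = x − 1 − log x`,
`E[exp((w/4)·f(Z_w/w))] = exp(−w/4 + (w/4)·log w + log Γ(w/4) − log Γ(w/2))`. -/
theorem chiSq_exp_moment_f (w : ℝ) (hw : 0 < w) :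
    ∫ x, Real.exp ((w / 4) * (x / w - 1 - Real.log (x / w))) ∂(chiSqMeasure w) =
      Real.exp (-(w / 4) + (w / 4) * Real.log w
        + Real.log (Real.Gamma (w / 4)) - Real.log (Real.Gamma (w / 2))) := by
  have hG2 : 0 < Real.Gamma (w / 2) := Real.Gamma_pos_of_pos (by linarith)
  have hG4 : 0 < Real.Gamma (w / 4) := Real.Gamma_pos_of_pos (by linarith)
  set K : ℝ := Real.exp (-(w / 4)) * w ^ (w / 4) * ((1 / 2 : ℝ) ^ (w / 2) / Real.Gamma (w / 2))
    with hK
  -- Step 1: rewrite integral w.r.t. withDensity as weighted Lebesgue integral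
  have hmeas : Measurable fun x => (gammaPDFReal (w / 2) (1 / 2) x).toNNReal :=
    (measurable_gammaPDFReal _ _).real_toNNReal
  have h1 : (∫ x, Real.exp ((w / 4) * (x / w - 1 - Real.log (x / w))) ∂(chiSqMeasure w)) =
      ∫ x, gammaPDFReal (w / 2) (1 / 2) x *
        Real.exp ((w / 4) * (x / w - 1 - Real.log (x / w))) := by
    have : chiSqMeasure w = volume.withDensity
        (fun x => ((gammaPDFReal (w / 2) (1 / 2) x).toNNReal : ENNReal)) := by
      rfl
    rw [this, integral_withDensity_eq_integral_smul hmeas]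
    refine integral_congr_ae (Filter.Eventually.of_forall fun x => ?_)
    have hnn : 0 ≤ gammaPDFReal (w / 2) (1 / 2) x :=
      gammaPDFReal_nonneg (by linarith) (by norm_num) x
    simp only [NNReal.smul_def, smul_eq_mul]
    rw [Real.coe_toNNReal _ hnn]
  rw [h1]
  -- Step 2: the integrand equals a.e. an indicator over Ioi 0
  have h0 : ∀ᵐ x : ℝ, x ≠ (0 : ℝ) := by
    rw [ae_iff]
    have : {a : ℝ | ¬a ≠ 0} = {0} := by ext x; simp
    rw [this, Real.volume_singleton]
  have h2 : ∀ᵐ x : ℝ, gammaPDFReal (w / 2) (1 / 2) x *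
      Real.exp ((w / 4) * (x / w - 1 - Real.log (x / w))) =
      Set.indicator (Set.Ioi (0 : ℝ))
        (fun x => K * (x ^ (w / 4 - 1) * Real.exp (-(4⁻¹ * x)))) x := by
    filter_upwards [h0] with x hx
    rcases hx.lt_or_gt with hxneg | hxpos
    · rw [Set.indicator_of_notMem (by simpa using hxneg.le)]
      simp [gammaPDFReal, not_le.mpr hxneg]
    · rw [Set.indicator_of_mem (Set.mem_Ioi.mpr hxpos)]
      have hxw : 0 < x / w := div_pos hxpos hw
      rw [gammaPDFReal, if_pos hxpos.le]
      have hlog : Real.log (x / w) = Real.log x - Real.log w :=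
        Real.log_div hxpos.ne' hw.ne'
      have e1 : (w / 4) * (x / w - 1 - Real.log (x / w)) =
          x / 4 + (-(w / 4)) + (w / 4 * Real.log w) + (-(w / 4) * Real.log x) := by
        rw [hlog]; field_simp; ring
      rw [e1, Real.exp_add, Real.exp_add, Real.exp_add]
      have e2 : Real.exp (w / 4 * Real.log w) = w ^ (w / 4) := by
        rw [Real.rpow_def_of_pos hw, mul_comm]
      have e3 : Real.exp (-(w / 4) * Real.log x) = x ^ (-(w / 4)) := by
        rw [Real.rpow_def_of_pos hxpos, mul_comm]
      rw [e2, e3, hK]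
      have e4 : x ^ (w / 2 - 1) * x ^ (-(w / 4)) = x ^ (w / 4 - 1) := by
        rw [← Real.rpow_add hxpos]; ring_nf
      have e5 : Real.exp (-(1 / 2 * x)) * Real.exp (x / 4) = Real.exp (-(4⁻¹ * x)) := by
        rw [← Real.exp_add]; ring_nf
      calc (1 / 2 : ℝ) ^ (w / 2) / Real.Gamma (w / 2) * x ^ (w / 2 - 1) *
            Real.exp (-(1 / 2 * x)) *
            (Real.exp (x / 4) * Real.exp (-(w / 4)) * w ^ (w / 4) * x ^ (-(w / 4)))
          = Real.exp (-(w / 4)) * w ^ (w / 4) *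
              ((1 / 2 : ℝ) ^ (w / 2) / Real.Gamma (w / 2)) *
              ((x ^ (w / 2 - 1) * x ^ (-(w / 4))) *
                (Real.exp (-(1 / 2 * x)) * Real.exp (x / 4))) := by ring
        _ = _ := by rw [e4, e5]
  rw [integral_congr_ae h2, integral_indicator measurableSet_Ioi, integral_const_mul,
    Real.integral_rpow_mul_exp_neg_mul_Ioi (by linarith) (by norm_num)]
  -- Step 3: arithmetic
  have h4 : ((1 : ℝ) / 4⁻¹) ^ (w / 4) = (2 : ℝ) ^ (w / 2) := by
    have : ((1 : ℝ) / 4⁻¹) = (2 : ℝ) ^ (2 : ℝ) := by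
      rw [show ((2 : ℝ) : ℝ) ^ (2 : ℝ) = 2 ^ (2 : ℕ) by
        rw [← Real.rpow_natCast]; norm_num]
      norm_num
    rw [this, ← Real.rpow_mul (by norm_num)]
    congr 1; ring
  have h5 : ((1 : ℝ) / 2) ^ (w / 2) * (2 : ℝ) ^ (w / 2) = 1 := by
    rw [one_div, ← Real.mul_rpow (by positivity) (by positivity)]
    norm_num
  rw [h4]
  rw [show Real.exp (-(w / 4) + (w / 4) * Real.log w
        + Real.log (Real.Gamma (w / 4)) - Real.log (Real.Gamma (w / 2))) =
      Real.exp (-(w / 4)) * Real.exp ((w / 4) * Real.log w) *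
        Real.Gamma (w / 4) / Real.Gamma (w / 2) by
    rw [Real.exp_sub, Real.exp_add, Real.exp_add, Real.exp_log hG4, Real.exp_log hG2]]
  rw [show Real.exp ((w / 4) * Real.log w) = w ^ (w / 4) by
    rw [Real.rpow_def_of_pos hw, mul_comm]]
  rw [hK]
  field_simp
  linear_combination h5
end
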